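/- Let n ≥ 1 be an integer and a, b ∈ ℤ, let M be the 3×4 integer matrix M = [[a, 0, 1, −n], [b, 0, 0, n+1], [−1, 1, 0, 0]], and let M^T : ℤ³ → ℤ⁴ be the ℤ-linear map given by the transpose of M. Then the cokernel ℤ⁴ / image(M^T) is isomorphic, as an abelian group, to ℤ ⊕ ℤ/rℤ, where r = gcd(n+1, b). -/

import Mathlib

open Matrix

/-- For the ray matrix `M = [[a,0,1,−n],[b,0,0,n+1],[−1,1,0,0]]` (`n ≥ 1`,
`a, b ∈ ℤ`), the cokernel `ℤ⁴ / im(Mᵀ)` of the transpose `Mᵀ : ℤ³ → ℤ⁴` is isomorphic, as an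
abelian group, to `ℤ ⊕ ℤ/rℤ`, where `r = gcd(n+1, b)`. -/
theorem ray_matrix_transpose_cokernel
    (n : ℕ) (hn : 1 ≤ n) (a b : ℤ)
    (M : Matrix (Fin 3) (Fin 4) ℤ)
    (hM : M = Matrix.of ![![a, 0, 1, -(n : ℤ)], ![b, 0, 0, (n : ℤ) + 1], ![-1, 1, 0, 0]]) :
    Nonempty (((Fin 4 → ℤ) ⧸ LinearMap.range (Mᵀ.mulVecLin)) ≃+
      ℤ × ZMod (Int.gcd ((n : ℤ) + 1) b)) := by
  subst hM
  set g : ℕ := Int.gcd ((n : ℤ) + 1) b with hgdef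
  set x : ℤ := Int.gcdA ((n : ℤ) + 1) b with hxdef
  set y : ℤ := Int.gcdB ((n : ℤ) + 1) b with hydef
  have hg : (g : ℤ) = ((n : ℤ) + 1) * x + b * y := Int.gcd_eq_gcd_ab _ _
  have hg0 : (g : ℤ) ≠ 0 := by
    have : g ≠ 0 := by
      intro h
      have h2 := (Int.gcd_eq_zero_iff.mp h).1
      omega
    exact_mod_cast this
  set A : ℤ := ((n : ℤ) + 1) / g with hAdef
  set B : ℤ := b / g with hBdef
  have hA : (g : ℤ) * A = (n : ℤ) + 1 := Int.mul_ediv_cancel' (Int.gcd_dvd_left _ _)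
  have hB : (g : ℤ) * B = b := Int.mul_ediv_cancel' (Int.gcd_dvd_right _ _)
  have h1 : A * x + B * y = 1 := by
    have h : (g : ℤ) * (A * x + B * y) = (g : ℤ) * 1 := by
      linear_combination x * hA + y * hB - hg
    exact mul_left_cancel₀ hg0 h
  -- the two linear functionals
  set ℓ1 : (Fin 4 → ℤ) →ₗ[ℤ] ℤ :=
    { toFun := fun u => -A * (u 0 + u 1 - a * u 2) + B * ((n : ℤ) * u 2 + u 3)
      map_add' := by intro u v; simp only [Pi.add_apply]; ring
      map_smul' := by intro m u; simp only [Pi.smul_apply, smul_eq_mul, RingHom.id_apply]; ring }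
    with hℓ1
  set ℓ2 : (Fin 4 → ℤ) →ₗ[ℤ] ℤ :=
    { toFun := fun u => y * (u 0 + u 1 - a * u 2) + x * ((n : ℤ) * u 2 + u 3)
      map_add' := by intro u v; simp only [Pi.add_apply]; ring
      map_smul' := by intro m u; simp only [Pi.smul_apply, smul_eq_mul, RingHom.id_apply]; ring }
    with hℓ2
  set F : (Fin 4 → ℤ) →ₗ[ℤ] ℤ × ZMod g :=
    ℓ1.prod ((Int.castAddHom (ZMod g)).toIntLinearMap.comp ℓ2) with hF
  have hFapply : ∀ u : Fin 4 → ℤ, F u =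
      (-A * (u 0 + u 1 - a * u 2) + B * ((n : ℤ) * u 2 + u 3),
       ((y * (u 0 + u 1 - a * u 2) + x * ((n : ℤ) * u 2 + u 3) : ℤ) : ZMod g)) := by
    intro u; rfl
  have hker : LinearMap.range ((Matrix.of ![![a, 0, 1, -(n : ℤ)], ![b, 0, 0, (n : ℤ) + 1],
      ![-1, 1, 0, 0]])ᵀ.mulVecLin) = LinearMap.ker F := by
    ext u
    constructor
    · rintro ⟨v, rfl⟩
      have hcomp : ∀ i, ((Matrix.of ![![a, 0, 1, -(n : ℤ)], ![b, 0, 0, (n : ℤ) + 1],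
          ![-1, 1, 0, 0]])ᵀ.mulVecLin v) i =
          ![a * v 0 + b * v 1 - v 2, v 2, v 0, -(n:ℤ) * v 0 + ((n:ℤ)+1) * v 1] i := by
        intro i
        fin_cases i <;>
          simp [Matrix.mulVecLin_apply, Matrix.mulVec, dotProduct,
            Fin.sum_univ_succ, Matrix.vecHead, Matrix.vecTail] <;> ring
      rw [LinearMap.mem_ker, hFapply]
      rw [hcomp 0, hcomp 1, hcomp 2, hcomp 3]
      simp only [Matrix.cons_val_zero, Matrix.cons_val_one, Matrix.head_cons,
        Matrix.cons_val_two, Matrix.tail_cons, Matrix.cons_val_three]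
      have e1 : -A * ((a * v 0 + b * v 1 - v 2) + v 2 - a * v 0)
          + B * ((n:ℤ) * v 0 + (-(n:ℤ) * v 0 + ((n:ℤ)+1) * v 1)) = 0 := by
        linear_combination v 1 * A * hB - v 1 * B * hA
      have e2 : y * ((a * v 0 + b * v 1 - v 2) + v 2 - a * v 0)
          + x * ((n:ℤ) * v 0 + (-(n:ℤ) * v 0 + ((n:ℤ)+1) * v 1)) = (g : ℤ) * v 1 := by
        linear_combination (-v 1) * hg
      rw [Prod.mk.injEq]
      refine ⟨e1, ?_⟩
      rw [e2]
      push_cast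
      simp
    · intro hu
      rw [LinearMap.mem_ker, hFapply, Prod.ext_iff] at hu
      obtain ⟨h1c, h2c⟩ := hu
      simp only [Prod.fst_zero, Prod.snd_zero] at h1c h2c
      rw [ZMod.intCast_zmod_eq_zero_iff_dvd] at h2c
      obtain ⟨k, hk⟩ := h2c
      set P : ℤ := u 0 + u 1 - a * u 2 with hP
      set Q : ℤ := (n : ℤ) * u 2 + u 3 with hQ
      have hbQ : b * Q = ((n : ℤ) + 1) * P := by
        linear_combination (g : ℤ) * h1c + P * hA - Q * hB
      have hbk : b * k = P := by
        have h : (g : ℤ) * (b * k) = (g : ℤ) * P := by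
          linear_combination (-b) * hk + x * hbQ + (-P) * hg
        exact mul_left_cancel₀ hg0 h
      have hnk : ((n : ℤ) + 1) * k = Q := by
        have h : (g : ℤ) * (((n : ℤ) + 1) * k) = (g : ℤ) * Q := by
          linear_combination (-((n:ℤ)+1)) * hk - y * hbQ + (-Q) * hg
        exact mul_left_cancel₀ hg0 h
      refine ⟨![u 2, k, u 1], ?_⟩
      funext i
      fin_cases i <;>
        simp [Matrix.mulVecLin_apply, Matrix.mulVec, dotProduct, Fin.sum_univ_succ] <;>
        linarith [hbk, hnk, hP, hQ]
  have hsurj : Function.Surjective F := by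
    rintro ⟨s, t⟩
    obtain ⟨t', rfl⟩ := ZMod.intCast_surjective t
    refine ⟨![-x * s + B * t', 0, 0, y * s + A * t'], ?_⟩
    rw [hFapply]
    simp only [Matrix.cons_val_zero, Matrix.cons_val_one, Matrix.head_cons,
      Matrix.cons_val_two, Matrix.tail_cons, Matrix.cons_val_three]
    rw [Prod.mk.injEq]
    constructor
    · linear_combination s * h1
    · congr 1
      linear_combination t' * h1
  exact ⟨(((Submodule.quotEquivOfEq _ _ hker).trans F.quotKerEquivRange).trans
    (LinearEquiv.ofTop _ (LinearMap.range_eq_top.2 hsurj))).toAddEquiv⟩
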